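/- For any profile of full-support beliefs p_1,…,p_n ∈ Δ(S), the truthful profile (p_1,…,p_n) with each agent reporting ρ_i = p_i is a Nash equilibrium of the log-utility revelation game under the symmetric linear opinion pool if and only if all beliefs are equal: p_1 = p_2 = ⋯ = p_n. -/

import Mathlib

lemma coe_fsum {α : Type*} (s : Finset α) (f : α → ℝ) :
    ((∑ a ∈ s, f a : ℝ) : EReal) = ∑ a ∈ s, ((f a : ℝ) : EReal) := by
  induction s using Finset.cons_induction with
  | empty => simp
  | cons a s ha ih => simp [Finset.sum_cons, ih, EReal.coe_add]

/-- Expected log utility with the convention `0 · ln 0 = 0`. -/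
noncomputable def payE {S : Type*} [Fintype S] (p x : S → ℝ) : EReal :=
  ∑ s, if x s = 0 ∧ p s ≠ 0 then (⊥ : EReal)
       else (((p s * Real.log (x s)) : ℝ) : EReal)

lemma payE_of_ne {S : Type*} [Fintype S] (p x : S → ℝ) (hx : ∀ u, x u ≠ 0) :
    payE p x = ((∑ u, p u * Real.log (x u) : ℝ) : EReal) := by
  rw [payE, coe_fsum]
  exact Finset.sum_congr rfl fun u _ => by simp [hx u]

/-- for full-support beliefs, truthful reporting is a Nash
equilibrium of the log-utility revelation game under the symmetric linear
opinion pool iff all beliefs coincide. -/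
theorem stmt19 {S : Type*} [Fintype S] [Nonempty S] {n : ℕ} (hn : 0 < n)
    (p : Fin n → S → ℝ) (hp : ∀ i, p i ∈ stdSimplex ℝ S) (hfs : ∀ i s, 0 < p i s) :
    (∀ i : Fin n, ∀ r ∈ stdSimplex ℝ S,
      payE (p i) (fun s => (∑ j, Function.update p i r j s) / n) ≤
        payE (p i) (fun s => (∑ j, p j s) / n)) ↔
    ∀ i j, p i = p j := by
  classical
  have hn' : (0:ℝ) < n := Nat.cast_pos.mpr hn
  haveI : Nonempty (Fin n) := Fin.pos_iff_nonempty.mp hn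
  set A : S → ℝ := fun u => ∑ j, p j u with hA
  have hApos : ∀ u, 0 < A u := fun u =>
    Finset.sum_pos (fun j _ => hfs j u) Finset.univ_nonempty
  have hAsum : ∑ u, A u = (n : ℝ) := by
    rw [hA]
    rw [Finset.sum_comm]
    simp only [(fun j => (hp j).2 : ∀ j : Fin n, ∑ u, p j u = 1)]
    simp
  have upd_sum : ∀ (i : Fin n) (v : S → ℝ) (u : S),
      ∑ j, Function.update p i v j u = A u - p i u + v u := by
    intro i v u
    have h1 : ∀ j : Fin n, Function.update p i v j u
        = (if j = i then v u - p i u else 0) + p j u := by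
      intro j
      rcases eq_or_ne j i with rfl | h
      · simp
      · simp [Function.update_apply, h]
    rw [Finset.sum_congr rfl fun j _ => h1 j, Finset.sum_add_distrib,
      Finset.sum_ite_eq' Finset.univ i]
    simp [hA]
    ring
  constructor
  · intro hNE
    have key : ∀ i s t, p i s * A t = p i t * A s := by
      intro i s t
      rcases eq_or_ne s t with rfl | hst
      · ring
      set d : S → ℝ := fun u => (if u = s then (1:ℝ) else 0) - (if u = t then 1 else 0)
        with hd
      have hds : d s = 1 := by simp [hd, hst]
      have hdt : d t = -1 := by simp [hd, Ne.symm hst]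
      have hdsum : ∑ u, d u = 0 := by
        simp [hd, Finset.sum_sub_distrib, Finset.sum_ite_eq']
      set δ : ℝ := min (min (p i s) (p i t)) (min (A s) (A t)) with hδdef
      have hδ : 0 < δ := by
        simp only [hδdef, lt_min_iff]
        exact ⟨⟨hfs i s, hfs i t⟩, hApos s, hApos t⟩
      have hδs : δ ≤ p i s := le_trans (min_le_left _ _) (min_le_left _ _)
      have hδt : δ ≤ p i t := le_trans (min_le_left _ _) (min_le_right _ _)
      have hδAs : δ ≤ A s := le_trans (min_le_right _ _) (min_le_left _ _)
      have hδAt : δ ≤ A t := le_trans (min_le_right _ _) (min_le_right _ _)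
      have hpos : ∀ ε : ℝ, |ε| < δ → ∀ u, 0 < A u + ε * d u := by
        intro ε hε u
        have h1 := abs_lt.mp hε
        rcases eq_or_ne u s with h | hus
        · rw [h, hds]; linarith
        rcases eq_or_ne u t with h | hut
        · rw [h, hdt]; nlinarith [hApos t]
        · have hz : d u = 0 := by simp [hd, hus, hut]
          rw [hz]; simpa using hApos u
      set G : ℝ → ℝ := fun ε => ∑ u, p i u * Real.log ((A u + ε * d u) / n) with hG
      have hGle : ∀ ε : ℝ, |ε| < δ → G ε ≤ G 0 := by
        intro ε hε
        have h1 := abs_lt.mp hε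
        have hrmem : (fun u => p i u + ε * d u) ∈ stdSimplex ℝ S := by
          refine ⟨fun u => ?_, ?_⟩
          · show 0 ≤ p i u + ε * d u
            rcases eq_or_ne u s with h | hus
            · rw [h, hds]; linarith [hfs i s]
            rcases eq_or_ne u t with h | hut
            · rw [h, hdt]; have := hfs i t; linarith
            · have hz : d u = 0 := by simp [hd, hus, hut]
              rw [hz]; simpa using (hfs i u).le
          · show ∑ u, (p i u + ε * d u) = 1
            rw [Finset.sum_add_distrib, ← Finset.mul_sum, hdsum, (hp i).2]
            ring
        have hle := hNE i _ hrmem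
        have harg : (fun u => (∑ j, Function.update p i (fun v => p i v + ε * d v) j u) / n)
            = fun u => (A u + ε * d u) / n := by
          funext u; rw [upd_sum]; ring_nf
        rw [harg] at hle
        have hne1 : ∀ u, (A u + ε * d u) / (n:ℝ) ≠ 0 := fun u => by
          have := hpos ε hε u; positivity
        have hne2 : ∀ u, A u / (n:ℝ) ≠ 0 := fun u => by
          have := hApos u; positivity
        rw [payE_of_ne _ _ hne1, payE_of_ne _ _ hne2] at hle
        have hle' := EReal.coe_le_coe_iff.mp hle
        simp only [hG]
        simpa using hle'
      have hmax : IsLocalMax G 0 := by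
        filter_upwards [Metric.ball_mem_nhds (0:ℝ) hδ] with ε hε
        exact hGle ε (by simpa [Real.dist_eq] using hε)
      have hder : HasDerivAt G (∑ u, p i u * (d u / A u)) 0 := by
        apply HasDerivAt.fun_sum
        intro u _
        have h1 : HasDerivAt (fun ε : ℝ => (A u + ε * d u) / n) (d u / n) 0 :=
          ((hasDerivAt_mul_const (d u)).const_add (A u)).div_const n
        have h2 : HasDerivAt (fun ε : ℝ => Real.log ((A u + ε * d u) / n))
            ((d u / n) / ((A u + 0 * d u) / n)) 0 := by
          refine h1.log ?_
          have := hApos u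
          rw [zero_mul, add_zero]
          positivity
        have h3 := h2.const_mul (p i u)
        convert h3 using 2
        · rfl
        rw [zero_mul, add_zero]
        have hAu := (hApos u).ne'
        field_simp
      have hzero : ∑ u, p i u * (d u / A u) = 0 := by
        have h := hmax.deriv_eq_zero
        rw [hder.deriv] at h
        exact h
      have hsum : ∑ u, p i u * (d u / A u) = p i s / A s - p i t / A t := by
        have h1 : ∀ u : S, p i u * (d u / A u)
            = (if u = s then p i u / A u else 0) - (if u = t then p i u / A u else 0) := by
          intro u
          rcases eq_or_ne u s with rfl | hus
          · simp [hds, hst]; ring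
          rcases eq_or_ne u t with rfl | hut
          · simp [hdt, hus]; ring
          · have : d u = 0 := by simp [hd, hus, hut]
            simp [this, hus, hut]
        rw [Finset.sum_congr rfl fun u _ => h1 u, Finset.sum_sub_distrib,
          Finset.sum_ite_eq' Finset.univ s, Finset.sum_ite_eq' Finset.univ t]
        simp
      rw [hsum] at hzero
      have hAs := (hApos s).ne'
      have hAt := (hApos t).ne'
      field_simp at hzero
      linarith
    have key2 : ∀ i u, (n : ℝ) * p i u = A u := by
      intro i u
      have h1 : ∑ t, p i u * A t = ∑ t, p i t * A u :=
        Finset.sum_congr rfl fun t _ => key i u t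
      rw [← Finset.mul_sum, hAsum, ← Finset.sum_mul, (hp i).2, one_mul] at h1
      linarith
    intro i j
    funext u
    have h1 := key2 i u
    have h2 := key2 j u
    have : (n:ℝ) * p i u = (n:ℝ) * p j u := by linarith
    exact mul_left_cancel₀ hn'.ne' this
  · intro hall i r hr
    have hAq : ∀ u, A u = n * p i u := by
      intro u
      have h1 : ∀ j : Fin n, p j u = p i u := fun j => by rw [hall j i]
      simp only [hA]
      rw [Finset.sum_congr rfl fun j _ => h1 j]
      simp [mul_comm]
    set x : S → ℝ := fun u => (A u - p i u + r u) / n with hx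
    have harg : (fun u => (∑ j, Function.update p i r j u) / n) = x := by
      funext u; rw [hx, upd_sum]
    have harg2 : (fun u => A u / n) = fun u => p i u := by
      funext u; rw [hAq u]; field_simp
    rw [harg]
    have hRHS : (fun s => (∑ j, p j s) / n) = fun u => p i u := harg2
    rw [hRHS]
    have hxnn : ∀ u, 0 ≤ x u := by
      intro u
      have h1 : 0 ≤ A u - p i u + r u := by
        have := hAq u
        have hn1 : (1:ℝ) ≤ n := by exact_mod_cast hn
        nlinarith [hfs i u, hr.1 u]
      show 0 ≤ (A u - p i u + r u) / n
      exact div_nonneg h1 hn'.le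
    by_cases hxz : ∀ u, x u ≠ 0
    · have hxpos : ∀ u, 0 < x u := fun u => lt_of_le_of_ne (hxnn u) (Ne.symm (hxz u))
      rw [payE_of_ne _ _ hxz, payE_of_ne _ _ (fun u => (hfs i u).ne')]
      rw [EReal.coe_le_coe_iff]
      have hxsum : ∑ u, x u = 1 := by
        rw [hx]
        simp only
        rw [← Finset.sum_div, Finset.sum_add_distrib, Finset.sum_sub_distrib,
          hAsum, (hp i).2, hr.2]
        field_simp
        ring
      have hterm : ∀ u, p i u * Real.log (x u)
          ≤ p i u * Real.log (p i u) + (x u - p i u) := by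
        intro u
        have hq := hfs i u
        have h1 : Real.log (x u / p i u) ≤ x u / p i u - 1 :=
          Real.log_le_sub_one_of_pos (div_pos (hxpos u) hq)
        rw [Real.log_div (hxz u) hq.ne'] at h1
        have h2 : p i u * (Real.log (x u) - Real.log (p i u))
            ≤ p i u * (x u / p i u - 1) := mul_le_mul_of_nonneg_left h1 hq.le
        have h3 : p i u * (x u / p i u - 1) = x u - p i u := by field_simp
        nlinarith
      calc ∑ u, p i u * Real.log (x u)
          ≤ ∑ u, (p i u * Real.log (p i u) + (x u - p i u)) :=
            Finset.sum_le_sum fun u _ => hterm u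
        _ = ∑ u, p i u * Real.log (p i u) := by
            rw [Finset.sum_add_distrib, Finset.sum_sub_distrib, hxsum, (hp i).2]
            ring
    · push_neg at hxz
      obtain ⟨u, hu⟩ := hxz
      have : payE (p i) x = ⊥ := by
        rw [payE, ← Finset.add_sum_erase _ _ (Finset.mem_univ u)]
        rw [if_pos ⟨hu, (hfs i u).ne'⟩]
        exact EReal.bot_add _
      rw [this]
      exact bot_le
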